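/- Let Ω ⊆ ℝⁿ be a convex set, let u, v : ℝⁿ → ℝ be strictly convex with v differentiable, and set f = u − v. Suppose y ∈ Ω and x' ∈ Ω minimizes the function z ↦ u(z) − zᵀ∇v(y) over Ω. If x' ≠ y, then f(x') < f(y). -/

import Mathlib

/-- Strict descent of the linear-majorization (CCCP) step for a d.c. function f = u − v with
    u, v strictly convex and v differentiable: if x' ∈ Ω minimizes z ↦ u(z) − zᵀ∇v(y) over
    the convex set Ω and x' ≠ y ∈ Ω, then f(x') < f(y). -/
theorem stmt_10 (n : ℕ) (Ω : Set (Fin n → ℝ)) (hΩ : Convex ℝ Ω)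
    (u v : (Fin n → ℝ) → ℝ)
    (hu : StrictConvexOn ℝ Set.univ u) (hv : StrictConvexOn ℝ Set.univ v)
    (hvd : Differentiable ℝ v)
    (y : Fin n → ℝ) (hy : y ∈ Ω) (x' : Fin n → ℝ) (hx' : x' ∈ Ω)
    (hmin : ∀ z ∈ Ω, u x' - fderiv ℝ v y x' ≤ u z - fderiv ℝ v y z)
    (hne : x' ≠ y) :
    u x' - v x' < u y - v y := by
  set d := x' - y with hd
  have hd0 : d ≠ 0 := sub_ne_zero.mpr hne
  -- g(t) = v(y + t • d)
  set g : ℝ → ℝ := fun t => v (y + t • d) with hg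
  have hginj : Function.Injective (fun t : ℝ => y + t • d) := by
    intro s t hst
    simp only [add_right_inj] at hst
    exact smul_left_injective ℝ hd0 hst
  have hgconv : StrictConvexOn ℝ Set.univ g := by
    refine ⟨convex_univ, ?_⟩
    intro s _ t _ hst a b ha hb hab
    have hne' : y + s • d ≠ y + t • d := fun h => hst (hginj h)
    have := hv.2 (Set.mem_univ (y + s • d)) (Set.mem_univ (y + t • d)) hne' ha hb hab
    calc g (a * s + b * t) = v (a • (y + s • d) + b • (y + t • d)) := by
          simp only [hg]
          congr 1
          have hy' : a • y + b • y = y := by rw [← add_smul, hab, one_smul]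
          rw [smul_add, smul_add, add_smul, smul_smul, smul_smul,
            add_add_add_comm, hy']
      _ < a • v (y + s • d) + b • v (y + t • d) := this
      _ = a • g s + b • g t := rfl
  have hderiv : HasDerivAt g (fderiv ℝ v y d) 0 := by
    have hline : HasDerivAt (fun t : ℝ => y + t • d) d 0 := by
      simpa using ((hasDerivAt_id (0:ℝ)).smul_const d).const_add y
    have := (hvd (y + (0:ℝ) • d)).hasFDerivAt.comp_hasDerivAt 0 hline
    simp only [zero_smul, add_zero] at this
    exact this
  have hkey : fderiv ℝ v y d < v x' - v y := by
    have hs := hgconv.lt_slope_of_hasDerivAt (Set.mem_univ (0:ℝ)) (Set.mem_univ (1:ℝ))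
      one_pos hderiv
    have : slope g 0 1 = v x' - v y := by
      simp [slope, hg, hd]
    rwa [this] at hs
  have hmin' := hmin y hy
  have hlin : fderiv ℝ v y d = fderiv ℝ v y x' - fderiv ℝ v y y := by
    rw [hd, map_sub]
  -- combine
  have : v y + (fderiv ℝ v y x' - fderiv ℝ v y y) < v x' := by
    rw [← hlin]; linarith
  linarith
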